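/- Let α ∈ ℝ be a root of the polynomial x³ − 3x + 1. Then α·(3 − α²) = 1 and (1 − α)·(2 − α − α²) = 1, so α and 1 − α are units of the ring ℤ[α]; moreover α and 1 − α are multiplicatively independent: for all integers m, n, if αᵐ·(1 − α)ⁿ = 1 then m = n = 0. -/

import Mathlib

open Polynomial

lemma aux_irr : Irreducible (X^3 - 3*X + 1 : ℚ[X]) := by
  have hg : (X^3 - 3*X + 1 : ℤ[X]).Monic := by monicity!
  have h2 : (2 : (ZMod 2)[X]) = 0 := by
    rw [← map_ofNat (Polynomial.C (R := ZMod 2)) 2, show (2:ZMod 2) = 0 from rfl, map_zero]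
  have hmap : Polynomial.map (Int.castRingHom (ZMod 2)) (X^3 - 3*X + 1 : ℤ[X])
      = X^3 + X + 1 := by
    simp only [Polynomial.map_add, Polynomial.map_sub, Polynomial.map_mul,
      Polynomial.map_pow, Polynomial.map_X, Polynomial.map_one, Polynomial.map_ofNat]
    linear_combination (-2*X) * h2
  have hdeg : (X^3 + X + 1 : (ZMod 2)[X]).natDegree = 3 := by compute_degree!
  have hne : (X^3 + X + 1 : (ZMod 2)[X]) ≠ 0 := by
    intro h; rw [h] at hdeg; simp at hdeg
  have hirr2 : Irreducible (X^3 + X + 1 : (ZMod 2)[X]) := by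
    rw [Polynomial.irreducible_iff_roots_eq_zero_of_degree_le_three (by omega) (by omega)]
    rw [Multiset.eq_zero_iff_forall_notMem]
    intro x hx
    rw [mem_roots hne] at hx
    have hx' : x^3 + x + 1 = 0 := by simpa [Polynomial.IsRoot] using hx
    revert hx'
    fin_cases x <;> decide
  have hirrZ : Irreducible (X^3 - 3*X + 1 : ℤ[X]) :=
    hg.irreducible_of_irreducible_map _ _ (hmap ▸ hirr2)
  have h := (hg.irreducible_iff_irreducible_map_fraction_map (K := ℚ)).mp hirrZ
  have hmapQ : Polynomial.map (algebraMap ℤ ℚ) (X^3 - 3*X + 1 : ℤ[X])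
      = X^3 - 3*X + 1 := by
    simp [Polynomial.map_add, Polynomial.map_sub, Polynomial.map_pow, Polynomial.map_mul]
  rwa [hmapQ] at h

lemma abs_zpow' (a : ℝ) (k : ℤ) : |a ^ k| = |a| ^ k := by
  rcases k with p|p <;> simp [abs_pow, zpow_natCast, zpow_negSucc, abs_inv]

noncomputable abbrev Kf : Type := AdjoinRoot (X^3 - 3*X + 1 : ℚ[X])

instance : Fact (Irreducible (X^3 - 3*X + 1 : ℚ[X])) := ⟨aux_irr⟩

noncomputable instance : Field Kf := AdjoinRoot.instField

noncomputable def emb (x : ℝ) (hx : x^3 - 3*x + 1 = 0) : Kf →+* ℝ :=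
  AdjoinRoot.lift (algebraMap ℚ ℝ) x (by
    simp [eval₂_add, eval₂_sub, eval₂_mul, eval₂_pow, eval₂_X, eval₂_one]
    linarith)

lemma emb_root (x : ℝ) (hx : x^3 - 3*x + 1 = 0) :
    emb x hx (AdjoinRoot.root _) = x := AdjoinRoot.lift_root _

lemma transfer (x y : ℝ) (hx : x^3 - 3*x + 1 = 0) (hy : y^3 - 3*y + 1 = 0)
    (m n : ℤ) (h : x ^ m * (1 - x) ^ n = 1) : y ^ m * (1 - y) ^ n = 1 := by
  set a : Kf := AdjoinRoot.root _ with ha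
  have key : a ^ m * (1 - a) ^ n = 1 := by
    apply (emb x hx).injective
    rw [map_mul, map_zpow₀, map_zpow₀, map_sub, map_one, emb_root]
    exact h
  have := congrArg (emb y hy) key
  rwa [map_mul, map_zpow₀, map_zpow₀, map_sub, map_one, emb_root] at this

theorem stmt13
    (α : ℝ) (hα : α ^ 3 - 3 * α + 1 = 0) :
    α * (3 - α ^ 2) = 1 ∧
    (1 - α) * (2 - α - α ^ 2) = 1 ∧
    ∀ m n : ℤ, α ^ m * (1 - α) ^ n = 1 → m = 0 ∧ n = 0 := by
  have hα0 : α ≠ 0 := by intro h; rw [h] at hα; norm_num at hα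
  have h1α : (1 : ℝ) - α ≠ 0 := by
    intro h
    have : α = 1 := by linarith
    rw [this] at hα; norm_num at hα
  refine ⟨by linear_combination -hα, by linear_combination hα, ?_⟩
  intro m n h
  by_contra hc
  -- the conjugate root β = (1-α)⁻¹
  set β : ℝ := (1 - α)⁻¹ with hβdef
  have hβ : β ^ 3 - 3 * β + 1 = 0 := by
    rw [hβdef]
    field_simp
    linear_combination -hα
  have hB : β ^ m * (1 - β) ^ n = 1 := transfer α β hα hβ m n h
  have hβ0 : β ≠ 0 := inv_ne_zero h1α
  have h1β : (1 : ℝ) - β ≠ 0 := by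
    intro hz
    have : β = 1 := by linarith
    rw [this] at hβ; norm_num at hβ
  set x := Real.log |α| with hx
  set y := Real.log |1 - α| with hy
  -- first log relation
  have e1 : (m : ℝ) * x + n * y = 0 := by
    have habs : |α| ^ m * |1 - α| ^ n = 1 := by
      rw [← abs_zpow', ← abs_zpow', ← abs_mul, h, abs_one]
    have := congrArg Real.log habs
    rwa [Real.log_mul (zpow_ne_zero _ (abs_ne_zero.mpr hα0))
        (zpow_ne_zero _ (abs_ne_zero.mpr h1α)),
      Real.log_zpow, Real.log_zpow, Real.log_one] at this
  -- second log relation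
  have hlogβ : Real.log |β| = -y := by
    rw [hβdef, abs_inv, Real.log_inv, hy]
  have h1βval : (1 : ℝ) - β = -α * (1 - α)⁻¹ := by
    rw [hβdef]; field_simp; ring
  have hlog1β : Real.log |1 - β| = x - y := by
    rw [h1βval, abs_mul, abs_inv, abs_neg,
      Real.log_mul (abs_ne_zero.mpr hα0) (inv_ne_zero (abs_ne_zero.mpr h1α)),
      Real.log_inv, hx, hy]
    ring
  have e2 : (m : ℝ) * (-y) + n * (x - y) = 0 := by
    have habs : |β| ^ m * |1 - β| ^ n = 1 := by
      rw [← abs_zpow', ← abs_zpow', ← abs_mul, hB, abs_one]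
    have := congrArg Real.log habs
    rw [Real.log_mul (zpow_ne_zero _ (abs_ne_zero.mpr hβ0))
        (zpow_ne_zero _ (abs_ne_zero.mpr h1β)),
      Real.log_zpow, Real.log_zpow, Real.log_one, hlogβ, hlog1β] at this
    linarith
  -- conclude x = 0
  have hmn : (0 : ℤ) < m^2 + m*n + n^2 := by
    rcases not_and_or.mp hc with hm | hn
    · have h1 : 1 ≤ m^2 := by
        have := Int.one_le_abs (by simpa using hm)
        nlinarith [abs_nonneg m, sq_abs m]
      nlinarith [sq_nonneg (m + 2*n)]
    · have h1 : 1 ≤ n^2 := by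
        have := Int.one_le_abs (by simpa using hn)
        nlinarith [abs_nonneg n, sq_abs n]
      nlinarith [sq_nonneg (2*m + n)]
  have hmnR : ((m : ℝ)^2 + m*n + n^2) ≠ 0 := by
    have : (0 : ℝ) < (m:ℝ)^2 + m*n + n^2 := by exact_mod_cast hmn
    linarith
  have hx0 : x = 0 := by
    have key : ((m : ℝ)^2 + m*n + n^2) * x = 0 := by
      linear_combination ((m:ℝ) + n) * e1 + (n:ℝ) * e2
    exact (mul_eq_zero.mp key).resolve_left hmnR
  -- so |α| = 1, contradiction
  have hlx : Real.log |α| = 0 := by rw [← hx]; exact hx0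
  have : |α| = 1 := by
    rcases Real.log_eq_zero.mp hlx with h' | h' | h'
    · exact absurd h' (abs_ne_zero.mpr hα0)
    · exact h'
    · have := abs_nonneg α; linarith
  rcases abs_eq (by norm_num : (0:ℝ) ≤ 1) |>.mp this with h' | h'
  · rw [h'] at hα; norm_num at hα
  · rw [h'] at hα; norm_num at hα
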